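/- Every element of the alternating group A_n (for n ≥ 3) can be written as a product of at most ⌊n/2⌋ cycles of length 3. -/

import Mathlib

open Equiv Equiv.Perm

private lemma cyc_spec {α : Type*} [DecidableEq α] {a b c : α}
    (hab : a ≠ b) (hac : a ≠ c) (hbc : b ≠ c) :
    (Equiv.swap a b * Equiv.swap a c) a = c ∧
    (Equiv.swap a b * Equiv.swap a c) c = b ∧
    (Equiv.swap a b * Equiv.swap a c) b = a ∧
    ∀ d, d ≠ a → d ≠ b → d ≠ c → (Equiv.swap a b * Equiv.swap a c) d = d := by
  refine ⟨?_, ?_, ?_, ?_⟩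
  · simp [Equiv.Perm.mul_apply, Equiv.swap_apply_of_ne_of_ne (Ne.symm hac) (Ne.symm hbc)]
  · simp [Equiv.Perm.mul_apply]
  · simp [Equiv.Perm.mul_apply, Equiv.swap_apply_of_ne_of_ne (Ne.symm hab) hbc]
  · intro d hda hdb hdc
    simp [Equiv.Perm.mul_apply, Equiv.swap_apply_of_ne_of_ne hda hdc,
      Equiv.swap_apply_of_ne_of_ne hda hdb]

private lemma aux_three {α : Type*} [Fintype α] [DecidableEq α] :
    ∀ m (σ : Equiv.Perm α), σ.support.card ≤ m → σ ∈ alternatingGroup α →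
    ∃ l : List (Equiv.Perm α),
      l.length ≤ σ.support.card / 2 ∧ (∀ τ ∈ l, Equiv.Perm.IsThreeCycle τ) ∧ l.prod = σ := by
  intro m
  induction m using Nat.strong_induction_on with
  | _ m ih =>
  intro σ hcard hσ
  rcases eq_or_ne σ 1 with rfl | hne
  · exact ⟨[], by simp, by simp, by simp⟩
  by_cases hA : ∃ a, σ a ≠ a ∧ σ (σ a) ≠ a
  · -- Case A
    obtain ⟨a, ha, ha2⟩ := hA
    have hba : σ a ≠ a := ha
    have hca : σ (σ a) ≠ a := ha2
    have hcb : σ (σ a) ≠ σ a := by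
      intro h
      exact hba (σ.injective h)
    set b := σ a with hb
    set c := σ b with hc
    have hasupp : a ∈ σ.support := Equiv.Perm.mem_support.2 ha
    have hbsupp : b ∈ σ.support := Equiv.Perm.mem_support.2 hcb
    have hcsupp : c ∈ σ.support := by
      rw [Equiv.Perm.mem_support]
      intro h
      exact hcb (σ.injective (h.trans hc))
    -- τ : a → b → c → a
    set τ : Equiv.Perm α := Equiv.swap a c * Equiv.swap a b with hτ
    obtain ⟨hτa', hτb', hτc', hτd⟩ := cyc_spec (α := α) (a := a) (b := c) (c := b)
      (Ne.symm hca) (Ne.symm hba) hcb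
    have hτa : τ a = b := hτa'
    have hτb : τ b = c := hτb'
    have hτc : τ c = a := hτc'
    have hτ3 : τ.IsThreeCycle :=
      Equiv.Perm.isThreeCycle_swap_mul_swap_same (Ne.symm hca) (Ne.symm hba) hcb
    set σ' := τ⁻¹ * σ with hσ'
    have hσ'a : σ' a = a := by
      have : τ⁻¹ b = a := by rw [← hτa]; exact τ.symm_apply_apply a
      simpa [hσ', Equiv.Perm.mul_apply, ← hb] using this
    have hσ'b : σ' b = b := by
      have : τ⁻¹ c = b := by rw [← hτb]; exact τ.symm_apply_apply b
      simpa [hσ', Equiv.Perm.mul_apply, ← hc] using this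
    have hsub : σ'.support ⊆ σ.support \ {a, b} := by
      intro d hd
      rw [Equiv.Perm.mem_support] at hd
      have hdsupp : d ∈ σ.support := by
        rw [Equiv.Perm.mem_support]
        intro hfix
        apply hd
        have hda : d ≠ a := by rintro rfl; exact ha hfix
        have hdb : d ≠ b := by rintro rfl; exact hcb (hc.trans hfix)
        have hdc : d ≠ c := by rintro rfl; exact (Equiv.Perm.mem_support.1 hcsupp) hfix
        have : τ d = d := hτd d hda hdc hdb
        have hinv : τ⁻¹ d = d := by rw [← this, ← Equiv.Perm.mul_apply, inv_mul_cancel, Equiv.Perm.one_apply, this]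
        simp [hσ', Equiv.Perm.mul_apply, hfix, hinv]
      have hda : d ≠ a := by rintro rfl; exact hd hσ'a
      have hdb : d ≠ b := by rintro rfl; exact hd hσ'b
      simp [Finset.mem_sdiff, hdsupp, hda, hdb]
    have habs : {a, b} ⊆ σ.support := by
      intro d hd
      simp only [Finset.mem_insert, Finset.mem_singleton] at hd
      rcases hd with rfl | rfl <;> assumption
    have hcard2 : ({a, b} : Finset α).card = 2 := by
      rw [Finset.card_insert_of_notMem (by simpa using Ne.symm hba), Finset.card_singleton]
    have hcard' : σ'.support.card ≤ σ.support.card - 2 := by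
      calc σ'.support.card ≤ (σ.support \ {a, b}).card := Finset.card_le_card hsub
        _ = σ.support.card - 2 := by rw [Finset.card_sdiff_of_subset habs, hcard2]
    have hm2 : 2 ≤ σ.support.card := by
      calc 2 = ({a, b} : Finset α).card := hcard2.symm
        _ ≤ σ.support.card := Finset.card_le_card habs
    have hσ'alt : σ' ∈ alternatingGroup α := by
      have := hτ3.mem_alternatingGroup
      exact Subgroup.mul_mem _ (Subgroup.inv_mem _ this) hσ
    obtain ⟨l', hl', h3', hp'⟩ := ih σ'.support.card (by omega) σ' le_rfl hσ'alt
    refine ⟨τ :: l', ?_, ?_, ?_⟩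
    · simp only [List.length_cons]
      omega
    · intro τ' hτ'
      rcases List.mem_cons.1 hτ' with rfl | h
      · exact hτ3
      · exact h3' _ h
    · simp [List.prod_cons, hp', hσ', mul_inv_cancel_left]
  · -- Case B : σ is an involution on its support
    push_neg at hA
    have hx : ∃ x, σ x ≠ x := by
      by_contra h
      push_neg at h
      exact hne (Equiv.ext fun x => (h x).trans rfl)
    obtain ⟨x, hx⟩ := hx
    set y := σ x with hy
    have hyx : σ y = x := hA x hx
    have hxy : y ≠ x := hx
    have hxsupp : x ∈ σ.support := Equiv.Perm.mem_support.2 hx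
    have hysupp : y ∈ σ.support := Equiv.Perm.mem_support.2 (by rw [hyx]; exact Ne.symm hxy)
    -- support has an element outside {x, y}
    have hw : ∃ w ∈ σ.support, w ≠ x ∧ w ≠ y := by
      by_contra h
      push_neg at h
      have hsub : σ.support ⊆ {x, y} := by
        intro d hd
        by_contra hd'
        simp only [Finset.mem_insert, Finset.mem_singleton, not_or] at hd'
        obtain ⟨h1, h2⟩ := hd'
        exact h2 (h d hd h1)
      have h2 : σ.support.card ≤ 2 := le_trans (Finset.card_le_card hsub)
        (le_trans (Finset.card_insert_le _ _) (by simp))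
      have hge2 : 2 ≤ σ.support.card := by
        have : ({x, y} : Finset α) ⊆ σ.support := by
          intro d hd
          simp only [Finset.mem_insert, Finset.mem_singleton] at hd
          rcases hd with rfl | rfl <;> assumption
        calc 2 = ({x, y} : Finset α).card := by
              rw [Finset.card_insert_of_notMem (by simpa using hxy.symm)]; simp
          _ ≤ σ.support.card := Finset.card_le_card this
      have heq2 : σ.support.card = 2 := le_antisymm h2 hge2
      have hswap : σ.IsSwap := Equiv.Perm.card_support_eq_two.1 heq2
      obtain ⟨u, v, huv, rfl⟩ := hswap
      have : Equiv.Perm.sign (Equiv.swap u v) = 1 := Equiv.Perm.mem_alternatingGroup.1 hσ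
      rw [Equiv.Perm.sign_swap huv] at this
      exact absurd this (by decide)
    obtain ⟨w, hwsupp, hwx, hwy⟩ := hw
    have hww : σ w ≠ w := Equiv.Perm.mem_support.1 hwsupp
    set v := σ w with hv
    have hvw : σ v = w := hA w hww
    have hvneqw : v ≠ w := hww
    have hvx : v ≠ x := fun h => hwy (σ.injective ((hv.symm.trans h).trans hyx.symm))
    have hvy : v ≠ y := fun h => hwx (σ.injective ((hv.symm.trans h).trans hy))
    have hvsupp : v ∈ σ.support := Equiv.Perm.mem_support.2 (by rw [hvw]; exact Ne.symm hvneqw)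
    -- τ₁ : x → w → y → x ; τ₂ : x → w → v → x
    set τ₁ : Equiv.Perm α := Equiv.swap x y * Equiv.swap x w with hτ₁
    set τ₂ : Equiv.Perm α := Equiv.swap x v * Equiv.swap x w with hτ₂
    obtain ⟨h1x, h1w, h1y, h1d⟩ := cyc_spec (α := α) (a := x) (b := y) (c := w)
      (Ne.symm hxy) (Ne.symm hwx) (Ne.symm hwy)
    obtain ⟨h2x, h2w, h2v, h2d⟩ := cyc_spec (α := α) (a := x) (b := v) (c := w)
      (Ne.symm hvx) (Ne.symm hwx) hvneqw
    have hτ₁3 : τ₁.IsThreeCycle :=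
      Equiv.Perm.isThreeCycle_swap_mul_swap_same (Ne.symm hxy) (Ne.symm hwx) (Ne.symm hwy)
    have hτ₂3 : τ₂.IsThreeCycle :=
      Equiv.Perm.isThreeCycle_swap_mul_swap_same (Ne.symm hvx) (Ne.symm hwx) hvneqw
    set σ' := τ₂⁻¹ * (τ₁⁻¹ * σ) with hσ'
    -- inverse values
    have hτ₁iy : τ₁⁻¹ y = w := by rw [← h1w]; exact τ₁.symm_apply_apply w
    have hτ₁ix : τ₁⁻¹ x = y := by rw [← h1y]; exact τ₁.symm_apply_apply y
    have hτ₁iw : τ₁⁻¹ w = x := by rw [← h1x]; exact τ₁.symm_apply_apply x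
    have hτ₂iw : τ₂⁻¹ w = x := by rw [← h2x]; exact τ₂.symm_apply_apply x
    have hτ₂iv : τ₂⁻¹ v = w := by rw [← h2w]; exact τ₂.symm_apply_apply w
    have hτ₂ix : τ₂⁻¹ x = v := by rw [← h2v]; exact τ₂.symm_apply_apply v
    have hτ₁fix : ∀ d, d ≠ x → d ≠ y → d ≠ w → τ₁⁻¹ d = d := by
      intro d h1 h2 h3
      have := h1d d h1 h2 h3
      rw [← this, ← Equiv.Perm.mul_apply, inv_mul_cancel, Equiv.Perm.one_apply, this]
    have hτ₂fix : ∀ d, d ≠ x → d ≠ v → d ≠ w → τ₂⁻¹ d = d := by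
      intro d h1 h2 h3
      have := h2d d h1 h2 h3
      rw [← this, ← Equiv.Perm.mul_apply, inv_mul_cancel, Equiv.Perm.one_apply, this]
    have hσ'x : σ' x = x := by
      simp [hσ', Equiv.Perm.mul_apply, ← hy, hτ₁iy, hτ₂iw]
    have hσ'y : σ' y = y := by
      simp only [hσ', Equiv.Perm.mul_apply, hyx, hτ₁ix]
      exact hτ₂fix y hxy (Ne.symm hvy) (Ne.symm hwy)
    have hσ'w : σ' w = w := by
      simp only [hσ', Equiv.Perm.mul_apply, ← hv]
      rw [hτ₁fix v hvx hvy hvneqw, hτ₂iv]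
    have hσ'v : σ' v = v := by
      simp only [hσ', Equiv.Perm.mul_apply, hvw, hτ₁iw, hτ₂ix]
    have hsub : σ'.support ⊆ σ.support \ {x, y, w, v} := by
      intro d hd
      rw [Equiv.Perm.mem_support] at hd
      have hdsupp : d ∈ σ.support := by
        rw [Equiv.Perm.mem_support]
        intro hfix
        apply hd
        have hdx : d ≠ x := by rintro rfl; exact hx hfix
        have hdy : d ≠ y := by rintro rfl; exact (Equiv.Perm.mem_support.1 hysupp) hfix
        have hdw : d ≠ w := by rintro rfl; exact hww hfix
        have hdv : d ≠ v := by rintro rfl; exact (Equiv.Perm.mem_support.1 hvsupp) hfix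
        rw [hσ', Equiv.Perm.mul_apply, Equiv.Perm.mul_apply, hfix,
          hτ₁fix d hdx hdy hdw, hτ₂fix d hdx hdv hdw]
      have hdx : d ≠ x := by rintro rfl; exact hd hσ'x
      have hdy : d ≠ y := by rintro rfl; exact hd hσ'y
      have hdw : d ≠ w := by rintro rfl; exact hd hσ'w
      have hdv : d ≠ v := by rintro rfl; exact hd hσ'v
      simp [Finset.mem_sdiff, hdsupp, hdx, hdy, hdw, hdv]
    have habs : ({x, y, w, v} : Finset α) ⊆ σ.support := by
      intro d hd
      simp only [Finset.mem_insert, Finset.mem_singleton] at hd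
      rcases hd with rfl | rfl | rfl | rfl <;> assumption
    have hcard4 : ({x, y, w, v} : Finset α).card = 4 := by
      rw [Finset.card_insert_of_notMem (by simp [hxy.symm, hwx.symm, hvx.symm]),
        Finset.card_insert_of_notMem (by simp [hwy.symm, hvy.symm]),
        Finset.card_insert_of_notMem (by simp [hvneqw.symm]), Finset.card_singleton]
    have hcard' : σ'.support.card ≤ σ.support.card - 4 := by
      calc σ'.support.card ≤ (σ.support \ {x, y, w, v}).card := Finset.card_le_card hsub
        _ = σ.support.card - 4 := by rw [Finset.card_sdiff_of_subset habs, hcard4]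
    have hm4 : 4 ≤ σ.support.card := by
      calc 4 = ({x, y, w, v} : Finset α).card := hcard4.symm
        _ ≤ σ.support.card := Finset.card_le_card habs
    have hσ'alt : σ' ∈ alternatingGroup α := by
      exact Subgroup.mul_mem _ (Subgroup.inv_mem _ hτ₂3.mem_alternatingGroup)
        (Subgroup.mul_mem _ (Subgroup.inv_mem _ hτ₁3.mem_alternatingGroup) hσ)
    obtain ⟨l', hl', h3', hp'⟩ := ih σ'.support.card (by omega) σ' le_rfl hσ'alt
    refine ⟨τ₁ :: τ₂ :: l', ?_, ?_, ?_⟩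
    · simp only [List.length_cons]
      omega
    · intro τ' hτ'
      rcases List.mem_cons.1 hτ' with rfl | hτ'
      · exact hτ₁3
      rcases List.mem_cons.1 hτ' with rfl | hτ'
      · exact hτ₂3
      · exact h3' _ hτ'
    · simp [List.prod_cons, hp', hσ', mul_inv_cancel_left, ← mul_assoc]

theorem stmt_0 (n : ℕ) (hn : 3 ≤ n) (σ : Equiv.Perm (Fin n))
    (hσ : σ ∈ alternatingGroup (Fin n)) :
    ∃ l : List (Equiv.Perm (Fin n)),
      l.length ≤ n / 2 ∧ (∀ τ ∈ l, Equiv.Perm.IsThreeCycle τ) ∧ l.prod = σ := by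
  obtain ⟨l, hl, h3, hp⟩ := aux_three σ.support.card σ le_rfl hσ
  refine ⟨l, le_trans hl ?_, h3, hp⟩
  have : σ.support.card ≤ n := by
    simpa using Finset.card_le_univ σ.support
  omega
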